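/- Let U, V ∈ ℝ^{n×r} have orthonormal columns. For real p ∈ [2, ∞) define the Schatten p-norm of a real matrix M by ‖M‖_p = (∑_i s_i(M)^p)^{1/p}, where s_i(M) are the singular values of M. Then for every p ∈ [2, ∞), ‖(I_n − UUᵀ)·V‖_p ≤ min_{O orthogonal, O ∈ ℝ^{r×r}} ‖UO − V‖_p ≤ √2·‖(I_n − UUᵀ)·V‖_p, and the same two-sided inequality holds with the operator (spectral) norm in place of ‖·‖_p. -/

import Mathlib

open MeasureTheory ProbabilityTheory Matrix

noncomputable section

/-- ℓ²→ℓ² operator (spectral) norm of a real matrix. -/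
def opNorm {m n : Type*} [Fintype m] [Fintype n] [DecidableEq n]
    (M : Matrix m n ℝ) : ℝ :=
  ‖LinearMap.toContinuousLinearMap (Matrix.toEuclideanLin M)‖

/-- ℓ²→ℓ² operator (spectral) norm of a complex matrix. -/
def opNormC {m n : Type*} [Fintype m] [Fintype n] [DecidableEq n]
    (M : Matrix m n ℂ) : ℝ :=
  ‖LinearMap.toContinuousLinearMap (Matrix.toEuclideanLin M)‖

/-- Euclidean norm of a finitely indexed real vector. -/
def vnorm {n : Type*} [Fintype n] (x : n → ℝ) : ℝ :=
  Real.sqrt (∑ i, (x i) ^ 2)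

/-- `‖M‖_{2,∞}`: the maximum Euclidean norm of the rows of `M`. -/
def twoInf {m n : Type*} [Fintype m] [Fintype n] (M : Matrix m n ℝ) : ℝ :=
  ⨆ i, vnorm (M i)

/-- The diagonal matrix `diag (σ 1, …, σ m)` built from a 1-indexed sequence `σ`. -/
def sdiag {m : ℕ} (σ : ℕ → ℝ) : Matrix (Fin m) (Fin m) ℝ :=
  Matrix.of fun i j => if i = j then σ ((i : ℕ) + 1) else 0

/-- Orthogonal projection `W_{k,s} W_{k,s}ᵀ` onto the span of the (1-indexed)
columns `k,…,s` of `W`. -/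
def projSlice {N m : ℕ} (W : Matrix (Fin N) (Fin m) ℝ) (k s : ℕ) :
    Matrix (Fin N) (Fin N) ℝ :=
  Matrix.of fun a b =>
    ∑ j : Fin m, if k ≤ (j : ℕ) + 1 ∧ (j : ℕ) + 1 ≤ s then W a j * W b j else 0

/-- `‖·‖_{2,∞}` of the submatrix of `M` given by the (1-indexed) columns `k,…,s`. -/
def sliceTwoInf {N m : ℕ} (M : Matrix (Fin N) (Fin m) ℝ) (k s : ℕ) : ℝ :=
  ⨆ a, Real.sqrt (∑ j : Fin m,
    if k ≤ (j : ℕ) + 1 ∧ (j : ℕ) + 1 ≤ s then (M a j) ^ 2 else 0)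

/-- `η = (11 b²/(b−1)²) √(2 (log 9) r + (K+7) log(N+n))`. -/
def eta (N n r : ℕ) (K b : ℝ) : ℝ :=
  11 * b ^ 2 / (b - 1) ^ 2 *
    Real.sqrt (2 * Real.log 9 * r + (K + 7) * Real.log ((N : ℝ) + n))

/-- `χ(b) = 1 + 1/(4b(b−1))`. -/
def chi (b : ℝ) : ℝ := 1 + 1 / (4 * b * (b - 1))

/-- `ξ(b) = 1 + 1/(2(b−1)²)`. -/
def xib (b : ℝ) : ℝ := 1 + 1 / (2 * (b - 1) ^ 2)

/-- `γ = (9 b²/(b−1)²) √(r (K+7) log(N+n))`. -/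
def gam (N n r : ℕ) (K b : ℝ) : ℝ :=
  9 * b ^ 2 / (b - 1) ^ 2 *
    Real.sqrt ((r : ℝ) * (K + 7) * Real.log ((N : ℝ) + n))

/-- `min {δ_{k-1}, δ_s}` where `δ_j = σ_j − σ_{j+1}` (1-indexed) and `δ_0 = ∞`
(so for `k = 1` the minimum is just `δ_s`). -/
def dmin (σ : ℕ → ℝ) (k s : ℕ) : ℝ :=
  if k = 1 then σ s - σ (s + 1) else min (σ (k - 1) - σ k) (σ s - σ (s + 1))

/-- The symmetric dilation `ℰ = [[0, E], [Eᵀ, 0]]` of a rectangular matrix `E`. -/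
def dil {N n : ℕ} (E : Matrix (Fin N) (Fin n) ℝ) :
    Matrix (Fin N ⊕ Fin n) (Fin N ⊕ Fin n) ℝ :=
  Matrix.fromBlocks 0 E Eᵀ 0

/-- Complex resolvent `G(z) = (z I − ℰ)⁻¹` of the dilation. -/
def resolvC {N n : ℕ} (z : ℂ) (E : Matrix (Fin N) (Fin n) ℝ) :
    Matrix (Fin N ⊕ Fin n) (Fin N ⊕ Fin n) ℂ :=
  (z • (1 : Matrix (Fin N ⊕ Fin n) (Fin N ⊕ Fin n) ℂ) -
      (dil E).map (Complex.ofReal))⁻¹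

/-- `φ₁(z) = z − ∑_{t=N+1}^{N+n} G(z)_{tt}` (complex version). -/
def phi1C {N n : ℕ} (z : ℂ) (E : Matrix (Fin N) (Fin n) ℝ) : ℂ :=
  z - ∑ t : Fin n, resolvC z E (Sum.inr t) (Sum.inr t)

/-- `φ₂(z) = z − ∑_{t=1}^{N} G(z)_{tt}` (complex version). -/
def phi2C {N n : ℕ} (z : ℂ) (E : Matrix (Fin N) (Fin n) ℝ) : ℂ :=
  z - ∑ t : Fin N, resolvC z E (Sum.inl t) (Sum.inl t)

/-- Real resolvent `G(z) = (z I − ℰ)⁻¹` of the dilation, for real `z`. -/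
def resolvR {N n : ℕ} (z : ℝ) (E : Matrix (Fin N) (Fin n) ℝ) :
    Matrix (Fin N ⊕ Fin n) (Fin N ⊕ Fin n) ℝ :=
  (z • (1 : Matrix (Fin N ⊕ Fin n) (Fin N ⊕ Fin n) ℝ) - dil E)⁻¹

/-- `φ₁(z)` for real `z` (equals the complex version at a real point). -/
def phi1R {N n : ℕ} (z : ℝ) (E : Matrix (Fin N) (Fin n) ℝ) : ℝ :=
  z - ∑ t : Fin n, resolvR z E (Sum.inr t) (Sum.inr t)

/-- `φ₂(z)` for real `z` (equals the complex version at a real point). -/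
def phi2R {N n : ℕ} (z : ℝ) (E : Matrix (Fin N) (Fin n) ℝ) : ℝ :=
  z - ∑ t : Fin N, resolvR z E (Sum.inl t) (Sum.inl t)

/-- `Φ(z)`: diagonal matrix whose first `N` diagonal entries are `1/φ₁(z)` and whose
last `n` diagonal entries are `1/φ₂(z)`. -/
def PhiC {N n : ℕ} (z : ℂ) (E : Matrix (Fin N) (Fin n) ℝ) :
    Matrix (Fin N ⊕ Fin n) (Fin N ⊕ Fin n) ℂ :=
  Matrix.of fun p q =>
    if p = q then Sum.elim (fun _ => (phi1C z E)⁻¹) (fun _ => (phi2C z E)⁻¹) p else 0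

/-- The `(N+n) × 2r` matrix `𝒰` of eigenvectors of the dilation of `A = U D Vᵀ`. -/
def calU {N n r : ℕ} (U : Matrix (Fin N) (Fin r) ℝ) (V : Matrix (Fin n) (Fin r) ℝ) :
    Matrix (Fin N ⊕ Fin n) (Fin r ⊕ Fin r) ℝ :=
  Matrix.fromBlocks ((Real.sqrt 2)⁻¹ • U) ((Real.sqrt 2)⁻¹ • U)
    ((Real.sqrt 2)⁻¹ • V) (-((Real.sqrt 2)⁻¹ • V))

/-- Schatten `p`-norm: `(∑ᵢ sᵢ(M)ᵖ)^{1/p}`, where the singular values `sᵢ(M)` are the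
square roots of the eigenvalues of `Mᴴ M`. -/
def schatten (p : ℝ) {m r : ℕ} (M : Matrix (Fin m) (Fin r) ℝ) : ℝ :=
  (∑ i, Real.sqrt ((show (Mᵀ * M).IsHermitian by
    simpa using Matrix.isHermitian_conjTranspose_mul_self M).eigenvalues i) ^ p) ^ (1 / p)

lemma conj_diag {r : ℕ} (X P : Matrix (Fin r) (Fin r) ℝ) (i : Fin r) :
    (Pᵀ * X * P) i i = (fun a => P a i) ⬝ᵥ X *ᵥ (fun a => P a i) := by
  simp only [Matrix.mul_apply, Matrix.mulVec, dotProduct, Matrix.transpose_apply,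
    Finset.sum_mul, Finset.mul_sum]
  rw [Finset.sum_comm]
  exact Finset.sum_congr rfl fun a _ => Finset.sum_congr rfl fun b _ => by ring

lemma eig_rpow_sum_le {r : ℕ} {A B : Matrix (Fin r) (Fin r) ℝ}
    (hA : A.PosSemidef) (hB : B.PosSemidef) {c q : ℝ} (hc : 0 ≤ c) (hq : 1 ≤ q)
    (h : (c • A - B).PosSemidef) :
    ∑ i, hB.1.eigenvalues i ^ q ≤ c ^ q * ∑ i, hA.1.eigenvalues i ^ q := by
  classical
  set W : Matrix (Fin r) (Fin r) ℝ := (hA.1.eigenvectorUnitary : Matrix (Fin r) (Fin r) ℝ) with hWdef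
  set Vm : Matrix (Fin r) (Fin r) ℝ := (hB.1.eigenvectorUnitary : Matrix (Fin r) (Fin r) ℝ) with hVdef
  set μ := hA.1.eigenvalues
  set lam := hB.1.eigenvalues
  have hWs : star W = Wᵀ := by
    rw [Matrix.star_eq_conjTranspose, Matrix.conjTranspose_eq_transpose_of_trivial]
  have hVs : star Vm = Vmᵀ := by
    rw [Matrix.star_eq_conjTranspose, Matrix.conjTranspose_eq_transpose_of_trivial]
  have hW1 : Wᵀ * W = 1 := by
    rw [← hWs]; exact (Matrix.mem_unitaryGroup_iff').mp hA.1.eigenvectorUnitary.2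
  have hW2 : W * Wᵀ = 1 := by
    rw [← hWs]; exact (Matrix.mem_unitaryGroup_iff).mp hA.1.eigenvectorUnitary.2
  have hV1 : Vmᵀ * Vm = 1 := by
    rw [← hVs]; exact (Matrix.mem_unitaryGroup_iff').mp hB.1.eigenvectorUnitary.2
  have hAspec : A = W * diagonal μ * Wᵀ := by
    have := hA.1.spectral_theorem
    simpa [hWs, ← hWdef] using this
  have hBspec : B = Vm * diagonal lam * Vmᵀ := by
    have := hB.1.spectral_theorem
    simpa [hVs, ← hVdef] using this
  set M : Matrix (Fin r) (Fin r) ℝ := Wᵀ * Vm with hMdef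
  have hM1 : Mᵀ * M = 1 := by
    rw [hMdef, Matrix.transpose_mul, Matrix.transpose_transpose, Matrix.mul_assoc,
      ← Matrix.mul_assoc W, hW2, Matrix.one_mul, hV1]
  have hM2 : M * Mᵀ = 1 := mul_eq_one_comm.mp hM1
  have hBconj : Vmᵀ * B * Vm = diagonal lam := by
    rw [hBspec]
    calc Vmᵀ * (Vm * diagonal lam * Vmᵀ) * Vm
        = (Vmᵀ * Vm) * diagonal lam * (Vmᵀ * Vm) := by
          simp only [Matrix.mul_assoc]
      _ = diagonal lam := by rw [hV1, Matrix.one_mul, Matrix.mul_one]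
  have hlam : ∀ i, (Vmᵀ * B * Vm) i i = lam i := by
    intro i; rw [hBconj]; simp
  have hAconj : Vmᵀ * A * Vm = Mᵀ * diagonal μ * M := by
    rw [hAspec, hMdef]
    simp only [Matrix.transpose_mul, Matrix.transpose_transpose, Matrix.mul_assoc]
  have hAdiag : ∀ i, (Vmᵀ * A * Vm) i i = ∑ j, (M j i) ^ 2 * μ j := by
    intro i
    rw [hAconj, Matrix.mul_assoc]
    simp only [Matrix.mul_apply, Matrix.transpose_apply]
    refine Finset.sum_congr rfl fun j _ => ?_
    simp only [Matrix.diagonal_apply, ite_mul, zero_mul, Finset.sum_ite_eq, Finset.mem_univ, if_true]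
    ring
  have hrow : ∀ i, ∑ j, (M j i) ^ 2 = 1 := by
    intro i
    have h1 : (Mᵀ * M) i i = (1 : Matrix (Fin r) (Fin r) ℝ) i i := by rw [hM1]
    simpa [Matrix.mul_apply, sq] using h1
  have hcol : ∀ j, ∑ i, (M j i) ^ 2 = 1 := by
    intro j
    have h1 : (M * Mᵀ) j j = (1 : Matrix (Fin r) (Fin r) ℝ) j j := by rw [hM2]
    simpa [Matrix.mul_apply, sq] using h1
  have hμ0 : ∀ j, 0 ≤ μ j := fun j => hA.eigenvalues_nonneg j
  have hlam0 : ∀ i, 0 ≤ lam i := fun i => hB.eigenvalues_nonneg i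
  have hper : ∀ i, lam i ^ q ≤ c ^ q * ∑ j, (M j i) ^ 2 * μ j ^ q := by
    intro i
    have hle : lam i ≤ c * ∑ j, (M j i) ^ 2 * μ j := by
      have hpsd := h.dotProduct_mulVec_nonneg (fun a => Vm a i)
      rw [star_trivial] at hpsd
      have heq : (fun a => Vm a i) ⬝ᵥ (c • A - B) *ᵥ (fun a => Vm a i)
          = c * (Vmᵀ * A * Vm) i i - (Vmᵀ * B * Vm) i i := by
        rw [Matrix.sub_mulVec, Matrix.smul_mulVec, dotProduct_sub, dotProduct_smul,
          conj_diag, conj_diag]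
        simp
      rw [heq, hlam, hAdiag] at hpsd
      linarith
    have hS0 : 0 ≤ ∑ j, (M j i) ^ 2 * μ j :=
      Finset.sum_nonneg fun j _ => mul_nonneg (sq_nonneg _) (hμ0 j)
    calc lam i ^ q ≤ (c * ∑ j, (M j i) ^ 2 * μ j) ^ q :=
          Real.rpow_le_rpow (hlam0 i) hle (le_trans zero_le_one hq)
      _ = c ^ q * (∑ j, (M j i) ^ 2 * μ j) ^ q := Real.mul_rpow hc hS0
      _ ≤ c ^ q * ∑ j, (M j i) ^ 2 * μ j ^ q := by
          refine mul_le_mul_of_nonneg_left ?_ (Real.rpow_nonneg hc q)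
          exact Real.rpow_arith_mean_le_arith_mean_rpow Finset.univ _ μ
            (fun j _ => sq_nonneg _) (hrow i) (fun j _ => hμ0 j) hq
  calc ∑ i, lam i ^ q ≤ ∑ i, c ^ q * ∑ j, (M j i) ^ 2 * μ j ^ q :=
        Finset.sum_le_sum fun i _ => hper i
    _ = c ^ q * ∑ j, μ j ^ q := by
        rw [← Finset.mul_sum, Finset.sum_comm]
        congr 1
        refine Finset.sum_congr rfl fun j _ => ?_
        rw [← Finset.sum_mul, hcol j, one_mul]

lemma gram_psd {n r : ℕ} (M : Matrix (Fin n) (Fin r) ℝ) : (Mᵀ * M).PosSemidef := by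
  rw [← Matrix.conjTranspose_eq_transpose_of_trivial]
  exact Matrix.posSemidef_conjTranspose_mul_self M

lemma schatten_le_schatten {n r : ℕ} {p : ℝ} (hp : 2 ≤ p) (M1 M2 : Matrix (Fin n) (Fin r) ℝ)
    {c : ℝ} (hc : 0 ≤ c)
    (h : ((c ^ 2) • (M2ᵀ * M2) - M1ᵀ * M1).PosSemidef) :
    schatten p M1 ≤ c * schatten p M2 := by
  have hp0 : (0:ℝ) < p := lt_of_lt_of_le two_pos hp
  have hq : (1:ℝ) ≤ p / 2 := by linarith
  have hB := gram_psd M1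
  have hA := gram_psd M2
  have hkey := eig_rpow_sum_le hA hB (c := c ^ 2) (q := p / 2) (sq_nonneg c) hq h
  -- rewrite schatten sums
  have hconv : ∀ {m r' : ℕ} (M : Matrix (Fin m) (Fin r') ℝ) (i : Fin r'),
      Real.sqrt ((show (Mᵀ * M).IsHermitian by
        simpa using Matrix.isHermitian_conjTranspose_mul_self M).eigenvalues i) ^ p
        = (gram_psd M).1.eigenvalues i ^ (p / 2) := by
    intro m r' M i
    have h0 : (0:ℝ) ≤ (gram_psd M).1.eigenvalues i := (gram_psd M).eigenvalues_nonneg i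
    have he : (show (Mᵀ * M).IsHermitian by
        simpa using Matrix.isHermitian_conjTranspose_mul_self M).eigenvalues i
        = (gram_psd M).1.eigenvalues i := rfl
    rw [he, Real.sqrt_eq_rpow, ← Real.rpow_mul h0, show (1/2:ℝ)*p = p/2 from by ring]
  unfold schatten
  simp only [hconv]
  have hs1 : 0 ≤ ∑ i, (gram_psd M1).1.eigenvalues i ^ (p/2) :=
    Finset.sum_nonneg fun i _ => Real.rpow_nonneg ((gram_psd M1).eigenvalues_nonneg i) _
  have hs2 : 0 ≤ ∑ i, (gram_psd M2).1.eigenvalues i ^ (p/2) :=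
    Finset.sum_nonneg fun i _ => Real.rpow_nonneg ((gram_psd M2).eigenvalues_nonneg i) _
  calc (∑ i, (gram_psd M1).1.eigenvalues i ^ (p/2)) ^ (1/p)
      ≤ ((c^2) ^ (p/2) * ∑ i, (gram_psd M2).1.eigenvalues i ^ (p/2)) ^ (1/p) :=
        Real.rpow_le_rpow hs1 hkey (by positivity)
    _ = c * (∑ i, (gram_psd M2).1.eigenvalues i ^ (p/2)) ^ (1/p) := by
        rw [Real.mul_rpow (Real.rpow_nonneg (sq_nonneg c) _) hs2]
        congr 1
        rw [← Real.rpow_natCast c 2, ← Real.rpow_mul hc, ← Real.rpow_mul hc]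
        norm_num
        rw [show (2:ℝ) * (p/2) * p⁻¹ = 1 from by field_simp, Real.rpow_one]

lemma vnorm_sq {n r : ℕ} (M : Matrix (Fin n) (Fin r) ℝ) (x : EuclideanSpace ℝ (Fin r)) :
    ‖Matrix.toEuclideanLin M x‖ ^ 2
      = (WithLp.equiv 2 _ x) ⬝ᵥ (Mᵀ * M) *ᵥ (WithLp.equiv 2 _ x) := by
  set v : Fin r → ℝ := WithLp.equiv 2 _ x
  rw [Matrix.toEuclideanLin_apply]
  rw [EuclideanSpace.norm_eq]
  rw [Real.sq_sqrt (Finset.sum_nonneg fun i _ => sq_nonneg _)]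
  have : ∀ i, ‖((WithLp.equiv 2 (Fin n → ℝ)).symm (M *ᵥ v) : EuclideanSpace ℝ (Fin n)) i‖ ^ 2
      = ((M *ᵥ v) i) ^ 2 := by intro i; rw [Real.norm_eq_abs, sq_abs]; rfl
  simp only [Real.norm_eq_abs, sq_abs]
  rw [← Matrix.mulVec_mulVec]
  rw [Matrix.dotProduct_mulVec v Mᵀ, Matrix.vecMul_transpose]
  simp [dotProduct, sq]
  rfl

lemma opNorm_le_opNorm {n r : ℕ} (M1 M2 : Matrix (Fin n) (Fin r) ℝ)
    {c : ℝ} (hc : 0 ≤ c)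
    (h : ((c ^ 2) • (M2ᵀ * M2) - M1ᵀ * M1).PosSemidef) :
    opNorm M1 ≤ c * opNorm M2 := by
  unfold opNorm
  refine ContinuousLinearMap.opNorm_le_bound _ (by positivity) fun x => ?_
  have hpt : ‖Matrix.toEuclideanLin M1 x‖ ≤ c * ‖Matrix.toEuclideanLin M2 x‖ := by
    have h1 := vnorm_sq M1 x
    have h2 := vnorm_sq M2 x
    have hpsd := h.dotProduct_mulVec_nonneg (WithLp.equiv 2 _ x)
    rw [star_trivial, Matrix.sub_mulVec, Matrix.smul_mulVec, dotProduct_sub,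
      dotProduct_smul] at hpsd
    have hsq : ‖Matrix.toEuclideanLin M1 x‖ ^ 2 ≤ (c * ‖Matrix.toEuclideanLin M2 x‖) ^ 2 := by
      rw [mul_pow, h1, h2]
      rw [smul_eq_mul] at hpsd
      linarith
    have h3 := Real.sqrt_le_sqrt hsq
    rwa [Real.sqrt_sq (norm_nonneg _), Real.sqrt_sq (by positivity)] at h3
  calc ‖(Matrix.toEuclideanLin M1).toContinuousLinearMap x‖
      = ‖Matrix.toEuclideanLin M1 x‖ := rfl
    _ ≤ c * ‖Matrix.toEuclideanLin M2 x‖ := hpt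
    _ ≤ c * (‖(Matrix.toEuclideanLin M2).toContinuousLinearMap‖ * ‖x‖) := by
        refine mul_le_mul_of_nonneg_left ?_ hc
        exact (Matrix.toEuclideanLin M2).toContinuousLinearMap.le_opNorm x
    _ = c * ‖(Matrix.toEuclideanLin M2).toContinuousLinearMap‖ * ‖x‖ := by ring

lemma gram1_eq {n r : ℕ} (U V : Matrix (Fin n) (Fin r) ℝ) (hU : Uᵀ * U = 1) (hV : Vᵀ * V = 1) :
    ((1 - U * Uᵀ) * V)ᵀ * ((1 - U * Uᵀ) * V) = 1 - (Uᵀ * V)ᵀ * (Uᵀ * V) := by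
  have hsym : (1 - U * Uᵀ)ᵀ = 1 - U * Uᵀ := by
    simp [Matrix.transpose_sub, Matrix.transpose_mul]
  have hidem : (1 - U * Uᵀ) * (1 - U * Uᵀ) = 1 - U * Uᵀ := by
    simp only [Matrix.mul_sub, Matrix.sub_mul, Matrix.one_mul, Matrix.mul_one]
    rw [Matrix.mul_assoc, ← Matrix.mul_assoc Uᵀ U Uᵀ, hU, Matrix.one_mul]
    abel
  rw [Matrix.transpose_mul, hsym, Matrix.mul_assoc, ← Matrix.mul_assoc (1 - U*Uᵀ), hidem]
  simp only [Matrix.transpose_mul, Matrix.transpose_transpose, Matrix.mul_sub,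
    Matrix.sub_mul, Matrix.one_mul, Matrix.mul_one, ← Matrix.mul_assoc]
  rw [hV]

lemma gram2_eq {n r : ℕ} (U V : Matrix (Fin n) (Fin r) ℝ) (hU : Uᵀ * U = 1) (hV : Vᵀ * V = 1)
    (O : Matrix (Fin r) (Fin r) ℝ) (hO : Oᵀ * O = 1) :
    (U * O - V)ᵀ * (U * O - V)
      = 1 + 1 - Oᵀ * (Uᵀ * V) - (Uᵀ * V)ᵀ * O := by
  simp only [Matrix.transpose_sub, Matrix.transpose_mul, Matrix.sub_mul, Matrix.mul_sub]
  have h1 : Oᵀ * Uᵀ * (U * O) = 1 := by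
    rw [Matrix.mul_assoc, ← Matrix.mul_assoc Uᵀ U O, hU, Matrix.one_mul, hO]
  rw [h1, hV]
  simp only [Matrix.transpose_mul, Matrix.transpose_transpose, Matrix.mul_assoc]
  abel

lemma psd_lower {n r : ℕ} (U V : Matrix (Fin n) (Fin r) ℝ) (hU : Uᵀ * U = 1) (hV : Vᵀ * V = 1)
    (O : Matrix (Fin r) (Fin r) ℝ) (hO : Oᵀ * O = 1) :
    (((1:ℝ) ^ 2) • ((U * O - V)ᵀ * (U * O - V))
      - ((1 - U * Uᵀ) * V)ᵀ * ((1 - U * Uᵀ) * V)).PosSemidef := by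
  have key : ((1:ℝ) ^ 2) • ((U * O - V)ᵀ * (U * O - V))
      - ((1 - U * Uᵀ) * V)ᵀ * ((1 - U * Uᵀ) * V)
      = (O - Uᵀ * V)ᵀ * (O - Uᵀ * V) := by
    rw [one_pow, one_smul, gram1_eq U V hU hV, gram2_eq U V hU hV O hO]
    simp only [Matrix.transpose_sub, Matrix.sub_mul, Matrix.mul_sub, hO]
    abel
  rw [key]; exact gram_psd _

lemma conj_entry {r : ℕ} (X P : Matrix (Fin r) (Fin r) ℝ) (i j : Fin r) :
    (Pᵀ * X * P) i j = (fun a => P a i) ⬝ᵥ X *ᵥ (fun a => P a j) := by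
  simp only [Matrix.mul_apply, Matrix.mulVec, dotProduct, Matrix.transpose_apply,
    Finset.sum_mul, Finset.mul_sum]
  rw [Finset.sum_comm]
  exact Finset.sum_congr rfl fun a _ => Finset.sum_congr rfl fun b _ => by ring

/-- Polar-type factor: for a square real matrix `C` with `1 - CᵀC` psd, there is an
orthogonal `O` with `Oᵀ C` symmetric psd and `Oᵀ C + Cᵀ O - 2 Cᵀ C` psd. -/
lemma exists_polar {r : ℕ} (C : Matrix (Fin r) (Fin r) ℝ)
    (hC1 : (1 - Cᵀ * C).PosSemidef) :
    ∃ O : Matrix (Fin r) (Fin r) ℝ, Oᵀ * O = 1 ∧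
      ((2:ℝ) • (1 - Cᵀ * C) - (1 + 1 - Oᵀ * C - Cᵀ * O)).PosSemidef := by
  classical
  set S : Matrix (Fin r) (Fin r) ℝ := Cᵀ * C with hSdef
  have hS : S.PosSemidef := gram_psd C
  set d := hS.1.eigenvalues with hddef
  set P : Matrix (Fin r) (Fin r) ℝ := (hS.1.eigenvectorUnitary : Matrix (Fin r) (Fin r) ℝ) with hPdef
  have hPs : star P = Pᵀ := by
    rw [Matrix.star_eq_conjTranspose, Matrix.conjTranspose_eq_transpose_of_trivial]
  have hP1 : Pᵀ * P = 1 := by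
    rw [← hPs]; exact (Matrix.mem_unitaryGroup_iff').mp hS.1.eigenvectorUnitary.2
  have hP2 : P * Pᵀ = 1 := by
    rw [← hPs]; exact (Matrix.mem_unitaryGroup_iff).mp hS.1.eigenvectorUnitary.2
  have hspec : S = P * diagonal d * Pᵀ := by
    have := hS.1.spectral_theorem
    simpa [hPs, ← hPdef] using this
  have hd0 : ∀ j, 0 ≤ d j := fun j => hS.eigenvalues_nonneg j
  -- d ≤ 1
  have hSentry : ∀ i j, (fun a => P a i) ⬝ᵥ S *ᵥ (fun a => P a j) = diagonal d i j := by
    intro i j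
    rw [← conj_entry]
    rw [show Pᵀ * S * P = diagonal d by
      rw [hspec]
      calc Pᵀ * (P * diagonal d * Pᵀ) * P = (Pᵀ * P) * diagonal d * (Pᵀ * P) := by
            simp only [Matrix.mul_assoc]
        _ = diagonal d := by rw [hP1, Matrix.one_mul, Matrix.mul_one]]
  have hd1 : ∀ j, d j ≤ 1 := by
    intro j
    have hpsd := hC1.dotProduct_mulVec_nonneg (fun a => P a j)
    rw [star_trivial] at hpsd
    have hcol : (fun a => P a j) ⬝ᵥ (fun a => P a j) = 1 := by
      have := congrFun (congrFun hP1 j) j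
      simpa [Matrix.mul_apply, Matrix.transpose_apply, dotProduct] using this
    rw [Matrix.sub_mulVec, dotProduct_sub, Matrix.one_mulVec, hcol, hSentry] at hpsd
    simp [Matrix.diagonal_apply_eq] at hpsd
    linarith
  -- the partial isometry columns
  set u : Fin r → EuclideanSpace ℝ (Fin r) := fun j =>
    if d j = 0 then 0 else (Real.sqrt (d j))⁻¹ • (WithLp.equiv 2 (Fin r → ℝ)).symm (C *ᵥ (fun a => P a j)) with hudef
  set s : Set (Fin r) := {j | d j ≠ 0} with hsdef
  have hCP : ∀ j k, (C *ᵥ (fun a => P a j)) ⬝ᵥ (C *ᵥ (fun a => P a k)) = diagonal d j k := by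
    intro j k
    rw [← hSentry j k, hSdef, ← Matrix.mulVec_mulVec, Matrix.dotProduct_mulVec _ Cᵀ,
      Matrix.vecMul_transpose]
  have huon : Orthonormal ℝ (s.restrict u) := by
    rw [orthonormal_iff_ite]
    rintro ⟨j, hj⟩ ⟨k, hk⟩
    have hj' : d j ≠ 0 := hj
    have hk' : d k ≠ 0 := hk
    change inner ℝ (u j) (u k) = _
    simp only [Set.restrict_apply, hudef, if_neg hj', if_neg hk']
    rw [inner_smul_left, inner_smul_right]
    have hip : (inner ℝ ((WithLp.equiv 2 (Fin r → ℝ)).symm (C *ᵥ fun a => P a j))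
        ((WithLp.equiv 2 (Fin r → ℝ)).symm (C *ᵥ fun a => P a k)) : ℝ)
        = diagonal d j k := by
      rw [← hCP j k]
      simp [PiLp.inner_apply, dotProduct, mul_comm]
    rw [hip]
    by_cases hjk : j = k
    · subst hjk
      simp [Matrix.diagonal_apply_eq, Subtype.ext_iff]
      rw [← Real.sqrt_mul_self (hd0 j)] at hj' ⊢
      field_simp
      rw [Real.sq_sqrt (Real.sqrt_nonneg _)]
    · have : (⟨j, hj⟩ : s) ≠ ⟨k, hk⟩ := by simp [Subtype.ext_iff, hjk]
      simp [Matrix.diagonal_apply_ne _ hjk, this, hjk]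
  obtain ⟨b, hb⟩ := huon.exists_orthonormalBasis_extension_of_card_eq
    (by simp [finrank_euclideanSpace])
  set Q : Matrix (Fin r) (Fin r) ℝ := Matrix.of fun a j => (WithLp.equiv 2 (Fin r → ℝ)) (b j) a with hQdef
  have hQ1 : Qᵀ * Q = 1 := by
    ext j k
    have hon := orthonormal_iff_ite.mp b.orthonormal j k
    rw [PiLp.inner_apply] at hon
    simp only [Matrix.mul_apply, Matrix.transpose_apply, Matrix.one_apply, hQdef, Matrix.of_apply]
    simpa [mul_comm] using hon
  have hQ2 : Q * Qᵀ = 1 := mul_eq_one_comm.mp hQ1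
  refine ⟨Q * Pᵀ, ?_, ?_⟩
  · rw [Matrix.transpose_mul, Matrix.transpose_transpose, Matrix.mul_assoc,
      ← Matrix.mul_assoc Qᵀ Q Pᵀ, hQ1, Matrix.one_mul, hP2]
  set O : Matrix (Fin r) (Fin r) ℝ := Q * Pᵀ with hOdef
  set sd : Fin r → ℝ := fun j => Real.sqrt (d j) with hsddef
  have hQCP : Qᵀ * C * P = diagonal sd := by
    ext j k
    have hentry : (Qᵀ * C * P) j k = (fun a => Q a j) ⬝ᵥ C *ᵥ (fun a => P a k) := by
      simp only [Matrix.mul_apply, Matrix.mulVec, dotProduct, Matrix.transpose_apply,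
        Finset.sum_mul, Finset.mul_sum]
      rw [Finset.sum_comm]
      exact Finset.sum_congr rfl fun a _ => Finset.sum_congr rfl fun c _ => by ring
    rw [hentry]
    by_cases hk : d k = 0
    · have hzero : C *ᵥ (fun a => P a k) = 0 := by
        rw [← dotProduct_self_eq_zero, hCP, Matrix.diagonal_apply_eq, hk]
      rw [hzero, dotProduct_zero]
      by_cases hjk : j = k
      · subst hjk; rw [Matrix.diagonal_apply_eq, hsddef]; simp [hk]
      · rw [Matrix.diagonal_apply_ne _ hjk]
    · have hk' : k ∈ s := hk
      have hbk : b k = u k := hb k hk'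
      have hu : C *ᵥ (fun a => P a k) = fun a => Real.sqrt (d k) * (WithLp.equiv 2 (Fin r → ℝ)) (u k) a := by
        funext a
        rw [hudef]
        simp only [if_neg hk]
        have hs0 : Real.sqrt (d k) ≠ 0 :=
          Real.sqrt_ne_zero'.mpr (lt_of_le_of_ne (hd0 k) (Ne.symm hk))
        field_simp
        simp [hs0]
      rw [hu]
      have : ((fun a => Q a j) ⬝ᵥ fun a => Real.sqrt (d k) * (WithLp.equiv 2 (Fin r → ℝ)) (u k) a)
          = Real.sqrt (d k) * ∑ a, Q a j * (WithLp.equiv 2 (Fin r → ℝ)) (u k) a := by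
        simp [dotProduct, Finset.mul_sum]
        exact Finset.sum_congr rfl fun a _ => by ring
      rw [this, ← hbk]
      have hip : ∑ a, Q a j * (WithLp.equiv 2 (Fin r → ℝ)) (b k) a
          = (inner ℝ (b j) (b k) : ℝ) := by
        rw [PiLp.inner_apply]
        simp [hQdef, mul_comm]
      rw [hip, orthonormal_iff_ite.mp b.orthonormal j k]
      by_cases hjk : j = k
      · subst hjk; simp [Matrix.diagonal_apply_eq, hsddef]
      · simp [Matrix.diagonal_apply_ne _ hjk, hjk]
  have hQC : Qᵀ * C = diagonal sd * Pᵀ := by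
    have := congrArg (fun X => X * Pᵀ) hQCP
    simpa only [Matrix.mul_assoc, hP2, Matrix.mul_one] using this
  have hOC : Oᵀ * C = P * diagonal sd * Pᵀ := by
    rw [hOdef, Matrix.transpose_mul, Matrix.transpose_transpose, Matrix.mul_assoc, hQC,
      ← Matrix.mul_assoc]
  have hCO : Cᵀ * O = P * diagonal sd * Pᵀ := by
    have := congrArg Matrix.transpose hOC
    simpa only [Matrix.transpose_mul, Matrix.transpose_transpose, Matrix.diagonal_transpose,
      Matrix.mul_assoc] using this
  have h1P : (1 : Matrix (Fin r) (Fin r) ℝ) = P * diagonal (fun _ => (1:ℝ)) * Pᵀ := by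
    rw [Matrix.diagonal_one, Matrix.mul_one, hP2]
  have heq : (2:ℝ) • (1 - S) - (1 + 1 - Oᵀ * C - Cᵀ * O)
      = P * diagonal (fun j => 2 * (sd j - d j)) * Pᵀ := by
    conv_lhs => rw [hspec, hOC, hCO, h1P]
    have hdsub : ∀ D1 D2 : Fin r → ℝ, diagonal (fun j => D1 j - D2 j)
        = diagonal D1 - diagonal D2 := by
      intro D1 D2; ext i j; by_cases h : i = j <;> simp [Matrix.diagonal_apply, h]
    have hdadd : ∀ D1 D2 : Fin r → ℝ, diagonal (fun j => D1 j + D2 j)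
        = diagonal D1 + diagonal D2 := by
      intro D1 D2; ext i j; by_cases h : i = j <;> simp [Matrix.diagonal_apply, h]
    have hdsmul : ∀ (c : ℝ) (D : Fin r → ℝ), diagonal (fun j => c * D j)
        = c • diagonal D := by
      intro c D; ext i j; by_cases h : i = j <;> simp [Matrix.diagonal_apply, h]
    have hsub : ∀ D1 D2 : Fin r → ℝ, P * diagonal D1 * Pᵀ - P * diagonal D2 * Pᵀ
        = P * diagonal (fun j => D1 j - D2 j) * Pᵀ := by
      intro D1 D2
      rw [hdsub, Matrix.mul_sub, Matrix.sub_mul]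
    have hadd : ∀ D1 D2 : Fin r → ℝ, P * diagonal D1 * Pᵀ + P * diagonal D2 * Pᵀ
        = P * diagonal (fun j => D1 j + D2 j) * Pᵀ := by
      intro D1 D2
      rw [hdadd, Matrix.mul_add, Matrix.add_mul]
    have hsmul : ∀ (c : ℝ) (D : Fin r → ℝ), c • (P * diagonal D * Pᵀ)
        = P * diagonal (fun j => c * D j) * Pᵀ := by
      intro c D
      rw [hdsmul, Matrix.mul_smul, Matrix.smul_mul]
    rw [hsub, hsmul, hadd, hsub, hsub, hsub]
    exact congrArg (fun D => P * diagonal D * Pᵀ) (by funext j; ring)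
  rw [heq]
  have hdiagpsd : (diagonal (fun j => 2 * (sd j - d j))).PosSemidef := by
    refine Matrix.posSemidef_diagonal_iff.mpr fun j => ?_
    have hle : d j ≤ sd j := by
      calc d j = Real.sqrt (d j) * Real.sqrt (d j) := (Real.mul_self_sqrt (hd0 j)).symm
        _ ≤ 1 * Real.sqrt (d j) :=
            mul_le_mul_of_nonneg_right (Real.sqrt_le_one.mpr (hd1 j)) (Real.sqrt_nonneg _)
        _ = Real.sqrt (d j) := one_mul _
    linarith
  have := hdiagpsd.mul_mul_conjTranspose_same P
  rwa [Matrix.conjTranspose_eq_transpose_of_trivial] at this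

/-- inequality (11) of the paper: two-sided Procrustes comparison
for Schatten p-norms (p ≥ 2) and the operator norm. -/
theorem stmt14_procrustes_schatten
    (n r : ℕ) (hr : 0 < r) (hrn : r ≤ n)
    (U V : Matrix (Fin n) (Fin r) ℝ) (hU : Uᵀ * U = 1) (hV : Vᵀ * V = 1) :
    (∀ p : ℝ, 2 ≤ p →
      (∀ O : Matrix (Fin r) (Fin r) ℝ, Oᵀ * O = 1 →
        schatten p ((1 - U * Uᵀ) * V) ≤ schatten p (U * O - V)) ∧
      ∃ O : Matrix (Fin r) (Fin r) ℝ, Oᵀ * O = 1 ∧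
        schatten p (U * O - V) ≤ Real.sqrt 2 * schatten p ((1 - U * Uᵀ) * V)) ∧
    (∀ O : Matrix (Fin r) (Fin r) ℝ, Oᵀ * O = 1 →
      opNorm ((1 - U * Uᵀ) * V) ≤ opNorm (U * O - V)) ∧
    ∃ O : Matrix (Fin r) (Fin r) ℝ, Oᵀ * O = 1 ∧
      opNorm (U * O - V) ≤ Real.sqrt 2 * opNorm ((1 - U * Uᵀ) * V) := by
  have hC1 : (1 - (Uᵀ * V)ᵀ * (Uᵀ * V)).PosSemidef := by
    rw [← gram1_eq U V hU hV]; exact gram_psd _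
  obtain ⟨O₀, hO₀, hpsd₀⟩ := exists_polar (Uᵀ * V) hC1
  have hupper : ((Real.sqrt 2 ^ 2) • (((1 - U * Uᵀ) * V)ᵀ * ((1 - U * Uᵀ) * V))
      - (U * O₀ - V)ᵀ * (U * O₀ - V)).PosSemidef := by
    have heq : (Real.sqrt 2 ^ 2) • (((1 - U * Uᵀ) * V)ᵀ * ((1 - U * Uᵀ) * V))
        - (U * O₀ - V)ᵀ * (U * O₀ - V)
        = (2:ℝ) • (1 - (Uᵀ * V)ᵀ * (Uᵀ * V))
          - (1 + 1 - O₀ᵀ * (Uᵀ * V) - (Uᵀ * V)ᵀ * O₀) := by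
      rw [Real.sq_sqrt (by norm_num : (0:ℝ) ≤ 2), gram1_eq U V hU hV,
        gram2_eq U V hU hV O₀ hO₀]
    rw [heq]; exact hpsd₀
  refine ⟨fun p hp => ⟨fun O hO => ?_, ⟨O₀, hO₀, ?_⟩⟩, fun O hO => ?_, ⟨O₀, hO₀, ?_⟩⟩
  · have := schatten_le_schatten hp ((1 - U * Uᵀ) * V) (U * O - V)
      zero_le_one (psd_lower U V hU hV O hO)
    simpa using this
  · exact schatten_le_schatten hp (U * O₀ - V) ((1 - U * Uᵀ) * V)
      (Real.sqrt_nonneg 2) hupper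
  · have := opNorm_le_opNorm ((1 - U * Uᵀ) * V) (U * O - V)
      zero_le_one (psd_lower U V hU hV O hO)
    simpa using this
  · exact opNorm_le_opNorm (U * O₀ - V) ((1 - U * Uᵀ) * V)
      (Real.sqrt_nonneg 2) hupper
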